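/- Let (ξ_j)_{j=1}^n be a time-homogeneous Markov process on a Polish space (X,d) with initial distribution P^{(1)} and transition kernel p(·|x), each satisfying GC(κ₁) (Gaussian concentration with constant κ₁), and suppose x ↦ p(·|x) is L-Lipschitz from (X,d) to (Prob_1(X), W_1). Then the joint law P^{(n)} on (X^n, d^{(1)}) satisfies GC(κ_n) with κ_n = κ₁ Σ_{m=1}^n (Σ_{k=0}^{m-1} L^k)². -/

import Mathlib

open MeasureTheory ProbabilityTheory Real Finset

variable {X : Type*} [MetricSpace X] [MeasurableSpace X]

/-- A measure `μ` satisfies the Gaussian concentration inequality `GC(κ)`: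
`∫ exp(tF) dμ ≤ exp(t ∫ F dμ + κ t²/2)` for every integrable `1`-Lipschitz `F`. -/
def GaussianConcentration (κ : ℝ) (μ : Measure X) : Prop :=
  ∀ F : X → ℝ, LipschitzWith 1 F → Integrable F μ → ∀ t : ℝ,
    ∫ x, Real.exp (t * F x) ∂μ ≤ Real.exp (t * ∫ x, F x ∂μ + κ * t ^ 2 / 2)

/-- The order-1 Wasserstein distance (over couplings with integrable cost). -/
noncomputable def wasserstein1 (μ ν : Measure X) : ℝ :=
  sInf { c | ∃ cpl : Measure (X × X), cpl.map Prod.fst = μ ∧ cpl.map Prod.snd = ν ∧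
    Integrable (fun z => dist z.1 z.2) cpl ∧ c = ∫ z, dist z.1 z.2 ∂cpl }

/-- The joint law of the first `n+1` variables of the time-homogeneous Markov process
with initial distribution `P1` and transition kernel `p`. -/
noncomputable def markovJointLaw (P1 : Measure X) (p : Kernel X X) :
    (n : ℕ) → Measure (Fin (n + 1) → X)
  | 0 => P1.map (fun x => fun _ => x)
  | n + 1 => (markovJointLaw P1 p n).bind
      (fun xs => (p (xs (Fin.last n))).map (fun y => Fin.snoc xs y))

section Aux
variable [OpensMeasurableSpace X]

lemma nonempty_of_prob (μ : Measure X) [IsProbabilityMeasure μ] : Nonempty X := by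
  by_contra h
  rw [not_nonempty_iff] at h
  have h1 : μ Set.univ = 1 := measure_univ
  rw [Set.univ_eq_empty_iff.mpr h, measure_empty] at h1
  exact zero_ne_one h1

lemma gc_dist_integrable {μ : Measure X} [IsProbabilityMeasure μ] {κ : ℝ} (hκ : 0 < κ)
    (h : GaussianConcentration κ μ) (x₀ : X) :
    Integrable (fun x => dist x x₀) μ := by
  set g : X → ℝ := fun x => dist x x₀ with hg
  have hgc : Continuous g := Continuous.dist continuous_id continuous_const
  have hgnn : ∀ x, 0 ≤ g x := fun x => dist_nonneg
  set gtr : ℕ → X → ℝ := fun N x => min (g x) N with hgtr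
  have hlip : ∀ N : ℕ, LipschitzWith 1 (gtr N) :=
    fun N => (LipschitzWith.dist_left x₀).min_const N
  have hmeas : ∀ N : ℕ, AEStronglyMeasurable (gtr N) μ :=
    fun N => ((hlip N).continuous).aestronglyMeasurable
  have hint : ∀ N : ℕ, Integrable (gtr N) μ := by
    intro N
    refine (integrable_const (N : ℝ)).mono' (hmeas N) ?_
    filter_upwards with x
    rw [Real.norm_eq_abs, abs_of_nonneg (le_min (hgnn x) N.cast_nonneg)]
    exact min_le_right _ _
  set m : ℕ → ℝ := fun N => ∫ x, gtr N x ∂μ with hm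
  have hmono : Monotone m := by
    apply monotone_nat_of_le_succ
    intro N
    refine integral_mono (hint N) (hint (N + 1)) fun x => ?_
    exact min_le_min le_rfl (by push_cast; linarith)
  set T : ℕ → ℝ := fun N => (μ {x | (N : ℝ) ≤ g x}).toReal with hT
  have hsetm : ∀ N : ℕ, MeasurableSet {x | (N : ℝ) ≤ g x} := by
    intro N
    exact measurableSet_le measurable_const hgc.measurable
  -- Chernoff bound
  have hchern : ∀ N : ℕ, T N ≤ Real.exp (m N + κ / 2 - N) := by
    intro N
    have h1 := h (gtr N) (hlip N) (hint N) 1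
    simp only [one_mul, one_pow, mul_one] at h1
    have h2 : Real.exp N * T N ≤ ∫ x, Real.exp (1 * gtr N x) ∂μ := by
      have hind : Integrable ({x | (N:ℝ) ≤ g x}.indicator fun _ => Real.exp N) μ :=
        (integrable_const _).indicator (hsetm N)
      have hexpint : Integrable (fun x => Real.exp (1 * gtr N x)) μ := by
        refine (integrable_const (Real.exp N)).mono'
          ((Real.continuous_exp.comp (continuous_const.mul (hlip N).continuous)).aestronglyMeasurable) ?_
        filter_upwards with x
        rw [Real.norm_eq_abs, abs_of_nonneg (Real.exp_nonneg _), one_mul]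
        exact Real.exp_le_exp.mpr (min_le_right _ _)
      have hle : ∀ x, ({x | (N:ℝ) ≤ g x}.indicator fun _ => Real.exp N) x
          ≤ Real.exp (1 * gtr N x) := by
        intro x
        rw [one_mul]
        by_cases hx : x ∈ {x | (N:ℝ) ≤ g x}
        · rw [Set.indicator_of_mem hx]
          have : gtr N x = N := min_eq_right hx
          rw [this]
        · rw [Set.indicator_of_notMem hx]
          exact Real.exp_nonneg _
      calc Real.exp N * T N = ∫ x, ({x | (N:ℝ) ≤ g x}.indicator fun _ => Real.exp N) x ∂μ := by
            rw [integral_indicator_const _ (hsetm N)]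
            simp [T, mul_comm, measureReal_def]
        _ ≤ ∫ x, Real.exp (1 * gtr N x) ∂μ := integral_mono hind hexpint hle
    simp only [one_mul] at h2
    have h3 : Real.exp N * T N ≤ Real.exp (m N + κ / 2) := h2.trans h1
    have h4 : T N ≤ Real.exp (m N + κ / 2) / Real.exp N := by
      rw [le_div_iff₀ (Real.exp_pos _)]
      linarith [h3]
    rwa [← Real.exp_sub] at h4
  -- step inequality
  have hTnn : ∀ N, 0 ≤ T N := fun N => ENNReal.toReal_nonneg
  have hstep : ∀ N : ℕ, m (N + 1) ≤ m N + T N := by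
    intro N
    have hind : Integrable ({x | (N:ℝ) ≤ g x}.indicator fun _ => (1:ℝ)) μ :=
      (integrable_const _).indicator (hsetm N)
    have hle : ∀ x, gtr (N+1) x ≤ gtr N x + ({x | (N:ℝ) ≤ g x}.indicator fun _ => (1:ℝ)) x := by
      intro x
      by_cases hx : x ∈ {x | (N:ℝ) ≤ g x}
      · rw [Set.indicator_of_mem hx]
        have h1 : gtr N x = N := min_eq_right hx
        have h2 : gtr (N+1) x ≤ ((N+1:ℕ):ℝ) := min_le_right _ _
        rw [h1]
        push_cast at h2 ⊢
        linarith
      · rw [Set.indicator_of_notMem hx]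
        have hxg : g x < N := lt_of_not_ge hx
        have h1 : gtr (N+1) x = g x := min_eq_left (by push_cast; linarith)
        have h2 : gtr N x = g x := min_eq_left (le_of_lt hxg)
        rw [h1, h2]; linarith
    calc m (N+1) ≤ ∫ x, (gtr N x + ({x | (N:ℝ) ≤ g x}.indicator fun _ => (1:ℝ)) x) ∂μ :=
          integral_mono (hint (N+1)) ((hint N).add hind) hle
      _ = m N + T N := by
          rw [integral_add (hint N) hind, integral_indicator_const _ (hsetm N)]
          simp [T, m, measureReal_def]
  -- tail goes to zero
  have htend : ∃ a : ℕ, T a ≤ 1/4 := by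
    have hanti : Antitone (fun N : ℕ => {x | (N:ℝ) ≤ g x}) := by
      intro i j hij x hx
      exact le_trans (by exact_mod_cast hij : (i:ℝ) ≤ (j:ℝ)) hx
    have hempty : ⋂ N : ℕ, {x | (N:ℝ) ≤ g x} = ∅ := by
      ext x
      simp only [Set.mem_iInter, Set.mem_empty_iff_false, iff_false, not_forall]
      obtain ⟨N, hN⟩ := exists_nat_gt (g x)
      exact ⟨N, by simp [not_le.mpr hN]⟩
    have ht := tendsto_measure_iInter_atTop (μ := μ)
      (fun N => (hsetm N).nullMeasurableSet) hanti ⟨0, measure_ne_top μ _⟩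
    rw [hempty] at ht
    simp only [measure_empty] at ht
    have := (ht.eventually (eventually_lt_nhds (by norm_num : (0:ENNReal) < 1/4))).exists
    obtain ⟨a, ha⟩ := this
    refine ⟨a, ?_⟩
    have := ENNReal.toReal_mono (by norm_num) ha.le
    simpa using this
  obtain ⟨a, ha⟩ := htend
  -- choice of N₀
  set N₀ : ℕ := max (4 * a) (⌈κ⌉₊ + 2) with hN₀
  have hN₀a : 4 * (a:ℝ) ≤ (N₀:ℝ) := by exact_mod_cast Nat.le_max_left (4*a) (⌈κ⌉₊+2)
  have hN₀κ : κ + 2 ≤ N₀ := by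
    have h1 : (⌈κ⌉₊ : ℝ) + 2 ≤ (N₀ : ℝ) := by exact_mod_cast Nat.le_max_right (4*a) (⌈κ⌉₊+2)
    have h2 : κ ≤ (⌈κ⌉₊ : ℝ) := Nat.le_ceil κ
    linarith
  -- m N₀ ≤ N₀ / 2
  have hmN₀ : m N₀ ≤ (N₀ : ℝ) / 2 := by
    have hb : ∀ x, gtr N₀ x ≤ (a:ℝ) + (N₀:ℝ) * ({x | (a:ℝ) ≤ g x}.indicator fun _ => (1:ℝ)) x := by
      intro x
      by_cases hx : x ∈ {x | (a:ℝ) ≤ g x}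
      · rw [Set.indicator_of_mem hx]
        have : gtr N₀ x ≤ (N₀:ℝ) := min_le_right _ _
        have : (0:ℝ) ≤ a := Nat.cast_nonneg a
        nlinarith [min_le_right (g x) ((N₀:ℝ))]
      · rw [Set.indicator_of_notMem hx]
        have hxg : g x < a := lt_of_not_ge hx
        have : gtr N₀ x ≤ g x := min_le_left _ _
        linarith
    have hind : Integrable (fun x => (a:ℝ) + (N₀:ℝ) * ({x | (a:ℝ) ≤ g x}.indicator fun _ => (1:ℝ)) x) μ :=
      (integrable_const _).add (((integrable_const _).indicator (hsetm a)).const_mul _)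
    have h1 : m N₀ ≤ (a:ℝ) + (N₀:ℝ) * T a := by
      calc m N₀ ≤ ∫ x, ((a:ℝ) + (N₀:ℝ) * ({x | (a:ℝ) ≤ g x}.indicator fun _ => (1:ℝ)) x) ∂μ :=
            integral_mono (hint N₀) hind hb
        _ = (a:ℝ) + (N₀:ℝ) * T a := by
            rw [integral_add (integrable_const _) (((integrable_const _).indicator (hsetm a)).const_mul _),
              integral_const]
            simp only [probReal_univ, smul_eq_mul, one_mul]
            rw [integral_const_mul, integral_indicator_const _ (hsetm a)]
            simp [T, measureReal_def]
    have hN₀nn : (0:ℝ) ≤ N₀ := Nat.cast_nonneg _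
    nlinarith [hTnn a]
  -- m stays below half along integers ≥ N₀
  have hhalf : ∀ k : ℕ, m (N₀ + k) ≤ ((N₀ + k : ℕ) : ℝ) / 2 := by
    intro k
    induction k with
    | zero => simpa using hmN₀
    | succ k ih =>
      have hT' : T (N₀ + k) ≤ Real.exp (κ/2 - ((N₀+k:ℕ):ℝ)/2) := by
        refine (hchern (N₀+k)).trans (Real.exp_le_exp.mpr ?_)
        linarith [ih]
      have h2exp : (2:ℝ) ≤ Real.exp 1 := by
        have := Real.add_one_le_exp 1; linarith
      have hhalfexp : Real.exp (κ/2 - ((N₀+k:ℕ):ℝ)/2) ≤ 1/2 := by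
        have h2 : ((N₀:ℕ):ℝ) ≤ ((N₀+k:ℕ):ℝ) := by
          push_cast; linarith [Nat.cast_nonneg (α := ℝ) k]
        have h1 : κ/2 - ((N₀+k:ℕ):ℝ)/2 ≤ -1 := by push_cast at h2 ⊢; linarith [hN₀κ]
        refine (Real.exp_le_exp.mpr h1).trans ?_
        rw [Real.exp_neg, inv_eq_one_div]
        have := one_div_le_one_div_of_le (by norm_num : (0:ℝ) < 2) h2exp
        linarith
      have := hstep (N₀ + k)
      have hfin : m (N₀ + (k+1)) ≤ m (N₀ + k) + T (N₀ + k) := by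
        have : N₀ + (k + 1) = (N₀ + k) + 1 := by ring
        rw [this]; exact hstep (N₀ + k)
      push_cast at ih ⊢
      have := hT'.trans hhalfexp
      push_cast at hfin
      linarith
  set E : ℝ := Real.exp (κ/2) with hE
  have hEpos : 0 < E := Real.exp_pos _
  set r : ℝ := Real.exp (-(1/2 : ℝ)) with hr
  have hr0 : 0 < r := Real.exp_pos _
  have hr23 : r ≤ 2/3 := by
    have h32 : (3/2 : ℝ) ≤ Real.exp (1/2) := by
      have := Real.add_one_le_exp (1/2 : ℝ); linarith
    rw [hr, Real.exp_neg, inv_eq_one_div]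
    have := one_div_le_one_div_of_le (by norm_num : (0:ℝ) < 3/2) h32
    linarith
  have hr1 : r ≤ 1 := by nlinarith
  have hTexp : ∀ k : ℕ, T (N₀ + k) ≤ E * r ^ (N₀ + k) := by
    intro k
    refine (hchern (N₀+k)).trans ?_
    have h1 : Real.exp (m (N₀+k) + κ/2 - (N₀+k:ℕ)) ≤ Real.exp (κ/2 - ((N₀+k:ℕ):ℝ)/2) := by
      refine Real.exp_le_exp.mpr ?_
      have := hhalf k
      linarith
    refine h1.trans (le_of_eq ?_)
    rw [hE, hr, ← Real.exp_nat_mul, ← Real.exp_add]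
    congr 1
    push_cast
    ring
  have hbud : ∀ k : ℕ, m (N₀ + k) ≤ (N₀:ℝ)/2 + 3*E*(1 - r^k) := by
    intro k
    induction k with
    | zero => simpa using hmN₀
    | succ k ih =>
      have hfin : m (N₀ + (k+1)) ≤ m (N₀ + k) + T (N₀ + k) := by
        have hnum : N₀ + (k + 1) = (N₀ + k) + 1 := by ring
        rw [hnum]; exact hstep (N₀ + k)
      have hTk : T (N₀ + k) ≤ E * r ^ k := by
        refine (hTexp k).trans ?_
        have : r ^ (N₀ + k) ≤ r ^ k :=
          pow_le_pow_of_le_one hr0.le hr1 (Nat.le_add_left k N₀)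
        nlinarith
      have hrk : (0:ℝ) ≤ r ^ k := pow_nonneg hr0.le k
      have hgoal : m (N₀ + k) + T (N₀ + k) ≤ (N₀:ℝ)/2 + 3*E*(1 - r^(k+1)) := by
        rw [pow_succ]
        nlinarith [hTk, ih, mul_nonneg (mul_nonneg hEpos.le hrk) (by linarith : (0:ℝ) ≤ 2 - 3*r)]
      exact hfin.trans hgoal
  have hmbound : ∀ N : ℕ, m N ≤ (N₀:ℝ)/2 + 3*E := by
    intro N
    refine (hmono (Nat.le_add_left N N₀)).trans ((hbud N).trans ?_)
    nlinarith [pow_nonneg hr0.le N, pow_le_one₀ hr0.le hr1 (n := N)]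
  -- conclude
  refine ⟨hgc.aestronglyMeasurable, ?_⟩
  rw [hasFiniteIntegral_iff_ofReal (Filter.Eventually.of_forall hgnn)]
  have hsup : ∀ x, ENNReal.ofReal (g x) = ⨆ N : ℕ, ENNReal.ofReal (gtr N x) := by
    intro x
    apply le_antisymm
    · obtain ⟨N, hN⟩ := exists_nat_ge (g x)
      refine le_iSup_of_le N (le_of_eq ?_)
      have hmin : gtr N x = g x := min_eq_left hN
      rw [hmin]
    · exact iSup_le fun N => ENNReal.ofReal_le_ofReal (min_le_left _ _)
  calc ∫⁻ x, ENNReal.ofReal (g x) ∂μ = ∫⁻ x, ⨆ N : ℕ, ENNReal.ofReal (gtr N x) ∂μ :=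
        lintegral_congr fun x => hsup x
    _ = ⨆ N : ℕ, ∫⁻ x, ENNReal.ofReal (gtr N x) ∂μ := by
        refine lintegral_iSup (fun N => ENNReal.measurable_ofReal.comp (hlip N).continuous.measurable)
          (fun i j hij x => ENNReal.ofReal_le_ofReal (min_le_min le_rfl (by exact_mod_cast hij)))
    _ ≤ ENNReal.ofReal ((N₀:ℝ)/2 + 3*E) := by
        refine iSup_le fun N => ?_
        have heq := ofReal_integral_eq_lintegral_ofReal (hint N)
          (Filter.Eventually.of_forall fun x => le_min (hgnn x) N.cast_nonneg)
        exact le_trans (le_of_eq heq.symm) (ENNReal.ofReal_le_ofReal (hmbound N))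
    _ < ⊤ := ENNReal.ofReal_lt_top

lemma lip_continuous {f : X → ℝ} {K : ℝ}
    (hf : ∀ x y, |f x - f y| ≤ K * dist x y) : Continuous f := by
  refine LipschitzWith.continuous (K := ⟨|K|, abs_nonneg K⟩) ?_
  refine LipschitzWith.of_dist_le_mul fun x y => ?_
  rw [Real.dist_eq]
  refine (hf x y).trans ?_
  exact mul_le_mul_of_nonneg_right (le_abs_self K) dist_nonneg

lemma gc_lip_integrable {μ : Measure X} [IsProbabilityMeasure μ] {κ : ℝ} (hκ : 0 < κ)
    (h : GaussianConcentration κ μ) {f : X → ℝ} {K : ℝ}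
    (hf : ∀ x y, |f x - f y| ≤ K * dist x y) : Integrable f μ := by
  obtain ⟨x₀⟩ := nonempty_of_prob μ
  have hd := gc_dist_integrable hκ h x₀
  refine ((integrable_const (|f x₀|)).add (hd.const_mul |K|)).mono'
    (lip_continuous hf).aestronglyMeasurable ?_
  filter_upwards with x
  simp only [Real.norm_eq_abs]
  have h1 : |f x - f x₀| ≤ K * dist x x₀ := hf x x₀
  have h2 : K * dist x x₀ ≤ |K| * dist x x₀ :=
    mul_le_mul_of_nonneg_right (le_abs_self K) dist_nonneg
  have h3 : |f x| - |f x₀| ≤ |f x - f x₀| := abs_sub_abs_le_abs_sub (f x) (f x₀)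
  show |f x| ≤ |f x₀| + |K| * dist x x₀
  linarith

/-- the strong (lintegral) form of Gaussian concentration, for `K`-Lipschitz functions. -/
lemma gc_lintegral {μ : Measure X} [IsProbabilityMeasure μ] {κ : ℝ} (hκ : 0 < κ)
    (h : GaussianConcentration κ μ) {f : X → ℝ} {K : ℝ} (hK : 0 < K)
    (hf : ∀ x y, |f x - f y| ≤ K * dist x y) (t : ℝ) :
    ∫⁻ x, ENNReal.ofReal (Real.exp (t * f x)) ∂μ ≤
      ENNReal.ofReal (Real.exp (t * ∫ x, f x ∂μ + κ * K^2 * t^2 / 2)) := by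
  have hfc : Continuous f := lip_continuous hf
  have hfi : Integrable f μ := gc_lip_integrable hκ h hf
  -- truncations
  set ftr : ℕ → X → ℝ := fun N x => max (min (f x) N) (-(N:ℝ)) with hftr
  have htrlip : ∀ N : ℕ, ∀ x y, |ftr N x - ftr N y| ≤ K * dist x y := by
    intro N x y
    refine le_trans ?_ (hf x y)
    have h1 : |min (f x) N - min (f y) N| ≤ |f x - f y| :=
      (abs_min_sub_min_le_max _ _ _ _).trans (by simp)
    have h2 : |ftr N x - ftr N y| ≤ |min (f x) N - min (f y) N| :=
      abs_max_sub_max_le_abs _ _ _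
    linarith
  have htrcont : ∀ N : ℕ, Continuous (ftr N) := fun N =>
    (hfc.min continuous_const).max continuous_const
  have habsb : ∀ (N : ℕ) x, |ftr N x| ≤ |f x| := by
    intro N x
    rw [abs_le]
    constructor
    · refine le_trans (le_min (neg_abs_le (f x))
        (le_trans (neg_nonpos.mpr (abs_nonneg (f x))) N.cast_nonneg)) ?_
      exact le_max_left _ _
    · exact max_le (le_trans (min_le_left _ _) (le_abs_self _))
        (le_trans (neg_nonpos.mpr N.cast_nonneg) (abs_nonneg _))
  have htrint : ∀ N : ℕ, Integrable (ftr N) μ := by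
    intro N
    refine hfi.abs.mono' (htrcont N).aestronglyMeasurable ?_
    filter_upwards with x
    rw [Real.norm_eq_abs]
    exact habsb N x
  have hgcN : ∀ N : ℕ, ∫ x, Real.exp (t * ftr N x) ∂μ ≤
      Real.exp (t * ∫ x, ftr N x ∂μ + κ * K^2 * t^2/2) := by
    intro N
    have hlipN : LipschitzWith 1 (fun x => ftr N x / K) := by
      refine LipschitzWith.of_dist_le_mul fun x y => ?_
      rw [Real.dist_eq]
      have heq : ftr N x / K - ftr N y / K = (ftr N x - ftr N y)/K := by ring
      rw [heq, abs_div, abs_of_pos hK, div_le_iff₀ hK, NNReal.coe_one, one_mul]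
      calc |ftr N x - ftr N y| ≤ K * dist x y := htrlip N x y
        _ = dist x y * K := by ring
    have hintN : Integrable (fun x => ftr N x / K) μ := (htrint N).div_const K
    have hgk := h _ hlipN hintN (t * K)
    have harg : ∀ x, t * K * (ftr N x / K) = t * ftr N x := by
      intro x; field_simp
    simp only [harg] at hgk
    rw [integral_div] at hgk
    refine hgk.trans (le_of_eq ?_)
    congr 1
    field_simp
  have hexpint : ∀ N : ℕ, Integrable (fun x => Real.exp (t * ftr N x)) μ := by
    intro N
    refine (integrable_const (Real.exp (|t| * N))).mono'
      ((Real.continuous_exp.comp (continuous_const.mul (htrcont N))).aestronglyMeasurable) ?_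
    filter_upwards with x
    rw [Real.norm_eq_abs, abs_of_nonneg (Real.exp_nonneg _)]
    refine Real.exp_le_exp.mpr ?_
    calc t * ftr N x ≤ |t * ftr N x| := le_abs_self _
      _ = |t| * |ftr N x| := abs_mul _ _
      _ ≤ |t| * N := by
          refine mul_le_mul_of_nonneg_left ?_ (abs_nonneg t)
          rw [abs_le]
          exact ⟨le_max_right _ _, max_le (min_le_right _ _)
            (le_trans (neg_nonpos.mpr N.cast_nonneg) N.cast_nonneg)⟩
  have hconv : ∀ N : ℕ, ∫⁻ x, ENNReal.ofReal (Real.exp (t * ftr N x)) ∂μ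
      = ENNReal.ofReal (∫ x, Real.exp (t * ftr N x) ∂μ) :=
    fun N => (ofReal_integral_eq_lintegral_ofReal (hexpint N)
      (Filter.Eventually.of_forall fun x => Real.exp_nonneg _)).symm
  have hptw : ∀ x, Filter.Tendsto (fun N : ℕ => ftr N x) Filter.atTop (nhds (f x)) := by
    intro x
    refine Filter.Tendsto.congr' ?_ tendsto_const_nhds
    obtain ⟨N₁, hN₁⟩ := exists_nat_ge (|f x|)
    rw [Filter.EventuallyEq, Filter.eventually_atTop]
    refine ⟨N₁, fun N hN => ?_⟩
    have habs : |f x| ≤ N := hN₁.trans (by exact_mod_cast hN)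
    rw [abs_le] at habs
    show f x = max (min (f x) N) (-(N:ℝ))
    rw [min_eq_left habs.2, max_eq_left (by linarith [habs.1])]
  have hlim : ∀ x, Filter.Tendsto (fun N : ℕ => ENNReal.ofReal (Real.exp (t * ftr N x)))
      Filter.atTop (nhds (ENNReal.ofReal (Real.exp (t * f x)))) := by
    intro x
    exact (ENNReal.continuous_ofReal.tendsto _).comp
      ((Real.continuous_exp.tendsto _).comp ((hptw x).const_mul t))
  have hmtend : Filter.Tendsto (fun N : ℕ => ∫ x, ftr N x ∂μ) Filter.atTop
      (nhds (∫ x, f x ∂μ)) := by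
    refine tendsto_integral_of_dominated_convergence (fun x => |f x|)
      (fun N => (htrcont N).aestronglyMeasurable) hfi.abs ?_ ?_
    · intro N
      filter_upwards with x
      rw [Real.norm_eq_abs]
      exact habsb N x
    · filter_upwards with x
      exact hptw x
  calc ∫⁻ x, ENNReal.ofReal (Real.exp (t * f x)) ∂μ
      = ∫⁻ x, Filter.liminf (fun N : ℕ => ENNReal.ofReal (Real.exp (t * ftr N x)))
          Filter.atTop ∂μ :=
        lintegral_congr fun x => ((hlim x).liminf_eq).symm
    _ ≤ Filter.liminf (fun N : ℕ => ∫⁻ x, ENNReal.ofReal (Real.exp (t * ftr N x)) ∂μ)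
          Filter.atTop :=
        lintegral_liminf_le fun N => ENNReal.measurable_ofReal.comp
          (Real.continuous_exp.comp (continuous_const.mul (htrcont N))).measurable
    _ ≤ Filter.liminf (fun N : ℕ => ENNReal.ofReal
          (Real.exp (t * ∫ x, ftr N x ∂μ + κ * K^2 * t^2/2))) Filter.atTop := by
        refine Filter.liminf_le_liminf (Filter.Eventually.of_forall fun N => ?_)
        rw [hconv N]
        exact ENNReal.ofReal_le_ofReal (hgcN N)
    _ = ENNReal.ofReal (Real.exp (t * ∫ x, f x ∂μ + κ * K^2 * t^2 / 2)) := by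
        refine Filter.Tendsto.liminf_eq ?_
        exact (ENNReal.continuous_ofReal.tendsto _).comp
          ((Real.continuous_exp.tendsto _).comp
            ((hmtend.const_mul t).add tendsto_const_nhds))

lemma coupling_set_nonempty [SecondCountableTopology X] {ν₁ ν₂ : Measure X} [IsProbabilityMeasure ν₁]
    [IsProbabilityMeasure ν₂] (x₀ : X)
    (h₁ : Integrable (fun x => dist x x₀) ν₁) (h₂ : Integrable (fun x => dist x x₀) ν₂) :
    { c : ℝ | ∃ cpl : Measure (X × X), cpl.map Prod.fst = ν₁ ∧ cpl.map Prod.snd = ν₂ ∧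
      Integrable (fun z => dist z.1 z.2) cpl ∧ c = ∫ z, dist z.1 z.2 ∂cpl }.Nonempty := by
  have hmapf : (ν₁.prod ν₂).map Prod.fst = ν₁ := Measure.fst_prod
  have hmaps : (ν₁.prod ν₂).map Prod.snd = ν₂ := Measure.snd_prod
  have ha : Integrable (fun z : X × X => dist z.1 x₀) (ν₁.prod ν₂) := by
    have h' := (integrable_map_measure
      ((continuous_id.dist continuous_const).aestronglyMeasurable)
      measurable_fst.aemeasurable).mp (by rw [hmapf]; exact h₁)
    exact h'
  have hb : Integrable (fun z : X × X => dist x₀ z.2) (ν₁.prod ν₂) := by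
    have h2' : Integrable (fun x => dist x₀ x) ν₂ := by simpa [dist_comm] using h₂
    have h' := (integrable_map_measure (f := Prod.snd) (g := fun x => dist x₀ x)
      ((continuous_const.dist continuous_id).aestronglyMeasurable)
      measurable_snd.aemeasurable).mp (by rw [hmaps]; exact h2')
    exact h'
  have hcost : Integrable (fun z : X × X => dist z.1 z.2) (ν₁.prod ν₂) := by
    refine (ha.add hb).mono' (continuous_fst.dist continuous_snd).aestronglyMeasurable ?_
    filter_upwards with z
    rw [Real.norm_eq_abs, abs_of_nonneg dist_nonneg]
    exact dist_triangle _ _ _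
  exact ⟨_, ν₁.prod ν₂, hmapf, hmaps, hcost, rfl⟩

lemma abs_integral_sub_le_w1 [SecondCountableTopology X] {ν₁ ν₂ : Measure X} [IsProbabilityMeasure ν₁]
    [IsProbabilityMeasure ν₂] {h : X → ℝ} {c : ℝ} (hc : 0 < c)
    (hlip : ∀ y z, |h y - h z| ≤ c * dist y z)
    (hne : { r : ℝ | ∃ cpl : Measure (X × X), cpl.map Prod.fst = ν₁ ∧ cpl.map Prod.snd = ν₂ ∧
      Integrable (fun z => dist z.1 z.2) cpl ∧ r = ∫ z, dist z.1 z.2 ∂cpl }.Nonempty)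
    (h₁ : Integrable h ν₁) (h₂ : Integrable h ν₂) :
    |∫ y, h y ∂ν₁ - ∫ y, h y ∂ν₂| ≤ c * wasserstein1 ν₁ ν₂ := by
  have hcont : Continuous h := lip_continuous hlip
  have key : ∀ r, r ∈ { r : ℝ | ∃ cpl : Measure (X × X), cpl.map Prod.fst = ν₁ ∧
      cpl.map Prod.snd = ν₂ ∧ Integrable (fun z => dist z.1 z.2) cpl ∧
      r = ∫ z, dist z.1 z.2 ∂cpl } → |∫ y, h y ∂ν₁ - ∫ y, h y ∂ν₂| ≤ c * r := by
    rintro r ⟨cpl, hfst, hsnd, hcost, rfl⟩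
    have hf1 : Integrable (fun z : X × X => h z.1) cpl := by
      have h' := (integrable_map_measure hcont.aestronglyMeasurable
        measurable_fst.aemeasurable).mp (by rw [hfst]; exact h₁)
      exact h'
    have hf2 : Integrable (fun z : X × X => h z.2) cpl := by
      have h' := (integrable_map_measure hcont.aestronglyMeasurable
        measurable_snd.aemeasurable).mp (by rw [hsnd]; exact h₂)
      exact h'
    have he1 : ∫ y, h y ∂ν₁ = ∫ z, h z.1 ∂cpl := by
      rw [← hfst, integral_map measurable_fst.aemeasurable hcont.aestronglyMeasurable]
    have he2 : ∫ y, h y ∂ν₂ = ∫ z, h z.2 ∂cpl := by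
      rw [← hsnd, integral_map measurable_snd.aemeasurable hcont.aestronglyMeasurable]
    rw [he1, he2, ← integral_sub hf1 hf2]
    calc |∫ z, (h z.1 - h z.2) ∂cpl| ≤ ∫ z, |h z.1 - h z.2| ∂cpl := by
          simpa [Real.norm_eq_abs] using norm_integral_le_integral_norm (fun z : X × X => h z.1 - h z.2) (μ := cpl)
      _ ≤ ∫ z, c * dist z.1 z.2 ∂cpl := by
          refine integral_mono (hf1.sub hf2).abs (hcost.const_mul c) fun z => hlip _ _
      _ = c * ∫ z, dist z.1 z.2 ∂cpl := integral_const_mul c _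
  have hlow : |∫ y, h y ∂ν₁ - ∫ y, h y ∂ν₂| / c ≤ wasserstein1 ν₁ ν₂ := by
    refine le_csInf hne fun r hr => ?_
    rw [div_le_iff₀ hc]
    calc |∫ y, h y ∂ν₁ - ∫ y, h y ∂ν₂| ≤ c * r := key r hr
      _ = r * c := mul_comm _ _
  calc |∫ y, h y ∂ν₁ - ∫ y, h y ∂ν₂|
      = c * (|∫ y, h y ∂ν₁ - ∫ y, h y ∂ν₂| / c) := by field_simp
    _ ≤ c * wasserstein1 ν₁ ν₂ := mul_le_mul_of_nonneg_left hlow hc.le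

end Aux

section Markov
variable [PolishSpace X] [BorelSpace X]

lemma measurable_snoc_pair (n : ℕ) :
    Measurable (fun q : ((Fin (n+1) → X) × X) => (Fin.snoc q.1 q.2 : Fin (n+2) → X)) := by
  rw [measurable_pi_iff]
  intro i
  refine Fin.lastCases ?_ ?_ i
  · simpa [Fin.snoc_last] using measurable_snd
  · intro j
    simpa [Fin.snoc_castSucc, Function.comp_def] using (measurable_pi_apply j).comp measurable_fst

lemma measurable_transition (p : Kernel X X) [IsMarkovKernel p] (n : ℕ) :
    Measurable (fun xs : Fin (n+1) → X =>
      ((p (xs (Fin.last n))).map (fun y => Fin.snoc xs y) : Measure (Fin (n+2) → X))) := by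
  refine Measure.measurable_of_measurable_coe _ fun s hs => ?_
  have hmeq : ∀ xs : Fin (n+1) → X, (p (xs (Fin.last n))).map (fun y => Fin.snoc xs y) s
      = p (xs (Fin.last n)) {y | (Fin.snoc xs y : Fin (n+2) → X) ∈ s} := by
    intro xs
    rw [Measure.map_apply (show Measurable (fun y => (Fin.snoc xs y : Fin (n+2) → X)) from (measurable_snoc_pair n).comp measurable_prodMk_left) hs]
    rfl
  simp_rw [hmeq]
  exact Kernel.measurable_kernel_prodMk_left
    (κ := p.comap (fun xs : Fin (n+1) → X => xs (Fin.last n)) (measurable_pi_apply _))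
    ((measurable_snoc_pair n) hs)

lemma markovJointLaw_succ (P1 : Measure X) (p : Kernel X X)
    [IsMarkovKernel p] (n : ℕ) [SFinite (markovJointLaw P1 p n)] :
    markovJointLaw P1 p (n+1) =
      ((markovJointLaw P1 p n) ⊗ₘ (p.comap (fun xs : Fin (n+1) → X => xs (Fin.last n))
        (measurable_pi_apply _))).map
        (fun q : ((Fin (n+1) → X) × X) => (Fin.snoc q.1 q.2 : Fin (n+2) → X)) := by
  ext s hs
  rw [show markovJointLaw P1 p (n+1) = (markovJointLaw P1 p n).bind
      (fun xs => (p (xs (Fin.last n))).map (fun y => Fin.snoc xs y)) from rfl,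
    Measure.bind_apply hs (measurable_transition p n).aemeasurable,
    Measure.map_apply (measurable_snoc_pair n) hs,
    Measure.compProd_apply ((measurable_snoc_pair n) hs)]
  refine lintegral_congr fun xs => ?_
  rw [Measure.map_apply (show Measurable (fun y => (Fin.snoc xs y : Fin (n+2) → X)) from (measurable_snoc_pair n).comp measurable_prodMk_left) hs]
  rfl

lemma markovJointLaw_isProb (P1 : Measure X) [IsProbabilityMeasure P1] (p : Kernel X X)
    [IsMarkovKernel p] (n : ℕ) : IsProbabilityMeasure (markovJointLaw P1 p n) := by
  induction n with
  | zero =>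
    rw [show markovJointLaw P1 p 0 = P1.map (fun x => fun _ => x) from rfl]
    exact Measure.isProbabilityMeasure_map (measurable_pi_lambda _ fun _ => measurable_id).aemeasurable
  | succ n ih =>
    haveI := ih
    rw [markovJointLaw_succ P1 p n]
    exact Measure.isProbabilityMeasure_map (measurable_snoc_pair n).aemeasurable

end Markov

lemma sum_ico_step (n : ℕ) (c d : ℕ → ℝ) (L : ℝ) (hdn : d n = c n + L * c (n+1))
    (hdlt : ∀ j, j < n → d j = c j) (i : ℕ) (hi : i ≤ n) :
    (∑ j ∈ Finset.Ico i (n+1), L^(j-i) * d j) = ∑ j ∈ Finset.Ico i (n+2), L^(j-i) * c j := by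
  rw [Finset.sum_Ico_succ_top (by omega : i ≤ n + 1), Finset.sum_Ico_succ_top (by omega : i ≤ n),
    Finset.sum_Ico_succ_top (by omega : i ≤ n)]
  have h1 : ∀ j ∈ Finset.Ico i n, L^(j-i) * d j = L^(j-i) * c j := by
    intro j hj
    rw [Finset.mem_Ico] at hj
    rw [hdlt j hj.2]
  rw [Finset.sum_congr rfl h1, hdn]
  have h2 : n + 1 - i = (n - i) + 1 := by omega
  rw [h2, pow_succ]
  ring

lemma sum_sq_step (n : ℕ) (c d : ℕ → ℝ) (L : ℝ) (hdn : d n = c n + L * c (n+1))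
    (hdlt : ∀ j, j < n → d j = c j) :
    (∑ i ∈ range (n+1), (∑ j ∈ Finset.Ico i (n+1), L^(j-i) * d j)^2) + (c (n+1))^2
      = ∑ i ∈ range (n+2), (∑ j ∈ Finset.Ico i (n+2), L^(j-i) * c j)^2 := by
  rw [Finset.sum_range_succ (n := n+1)]
  congr 1
  · refine Finset.sum_congr rfl fun i hi => ?_
    rw [Finset.mem_range] at hi
    rw [sum_ico_step n c d L hdn hdlt i (by omega)]
  · rw [Finset.sum_Ico_succ_top (le_refl (n+1))]
    simp

lemma sum_reflect (n : ℕ) (L : ℝ) :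
    ∑ i ∈ range (n+1), (∑ j ∈ Finset.Ico i (n+1), L^(j-i) * (1:ℝ))^2
      = ∑ m ∈ range (n+1), (∑ k ∈ range (m+1), L ^ k)^2 := by
  have hgi : ∀ i ∈ range (n+1), (∑ j ∈ Finset.Ico i (n+1), L^(j-i) * (1:ℝ))^2
      = (∑ k ∈ range ((n-i)+1), L^k)^2 := by
    intro i hi
    rw [Finset.mem_range] at hi
    congr 1
    rw [Finset.sum_Ico_eq_sum_range]
    have h2 : n + 1 - i = (n - i) + 1 := by omega
    rw [h2]
    refine Finset.sum_congr rfl fun k hk => ?_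
    simp [Nat.add_sub_cancel_left]
  rw [Finset.sum_congr rfl hgi]
  have := Finset.sum_range_reflect (fun m => (∑ k ∈ range (m+1), L^k)^2) (n+1)
  simpa using this

section Main
variable [PolishSpace X] [BorelSpace X]

lemma l1_lip_continuous {n : ℕ} {F : (Fin n → X) → ℝ} {c : ℕ → ℝ} (hc : ∀ k, 0 ≤ c k)
    (hF : ∀ a b, |F a - F b| ≤ ∑ i : Fin n, c i.val * dist (a i) (b i)) : Continuous F := by
  refine LipschitzWith.continuous (K := ⟨∑ i ∈ range n, c i,
    Finset.sum_nonneg fun i _ => hc i⟩)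
    (LipschitzWith.of_dist_le_mul fun a b => ?_)
  rw [Real.dist_eq]
  refine (hF a b).trans ?_
  calc ∑ i : Fin n, c i.val * dist (a i) (b i)
      ≤ ∑ i : Fin n, c i.val * dist a b :=
        Finset.sum_le_sum fun i _ =>
          mul_le_mul_of_nonneg_left (dist_le_pi_dist a b i) (hc i.val)
    _ = (∑ i : Fin n, c i.val) * dist a b := (Finset.sum_mul _ _ _).symm
    _ = (∑ i ∈ range n, c i) * dist a b := by rw [Fin.sum_univ_eq_sum_range]

lemma markov_key (P1 : Measure X) [IsProbabilityMeasure P1] (p : Kernel X X) [IsMarkovKernel p]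
    (κ₁ L : ℝ) (hκ : 0 < κ₁) (hL : 0 ≤ L)
    (hGC1 : GaussianConcentration κ₁ P1)
    (hGCp : ∀ x : X, GaussianConcentration κ₁ (p x))
    (hLip : ∀ x y : X, wasserstein1 (p x) (p y) ≤ L * dist x y) :
    ∀ (n : ℕ) (c : ℕ → ℝ), (∀ k, 0 < c k) → ∀ F : (Fin (n + 1) → X) → ℝ,
      (∀ a b, |F a - F b| ≤ ∑ i : Fin (n + 1), c i.val * dist (a i) (b i)) →
      Integrable F (markovJointLaw P1 p n) → ∀ t : ℝ,
      ∫⁻ xs, ENNReal.ofReal (Real.exp (t * F xs)) ∂(markovJointLaw P1 p n) ≤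
        ENNReal.ofReal (Real.exp (t * ∫ xs, F xs ∂(markovJointLaw P1 p n) +
          κ₁ * (∑ i ∈ range (n+1), (∑ j ∈ Finset.Ico i (n+1), L^(j-i) * c j)^2) * t^2 / 2)) := by
  intro n
  induction n with
  | zero =>
    intro c hc F hF hInt t
    have hrep : markovJointLaw P1 p 0 = P1.map (fun x => fun _ : Fin 1 => x) := rfl
    have hdiag : Measurable (fun x : X => fun _ : Fin 1 => x) :=
      measurable_pi_lambda _ fun _ => measurable_id
    have hFc : Continuous F := l1_lip_continuous (fun k => (hc k).le) hF
    have hflip : ∀ x y : X, |F (fun _ => x) - F (fun _ => y)| ≤ c 0 * dist x y := by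
      intro x y
      have h1 := hF (fun _ => x) (fun _ => y)
      simpa [Fin.sum_univ_one] using h1
    have hmain := gc_lintegral hκ hGC1 (hc 0) hflip t
    have hme : Measurable fun z : Fin (0+1) → X => ENNReal.ofReal (Real.exp (t * F z)) :=
      ENNReal.measurable_ofReal.comp
        (Real.continuous_exp.comp (continuous_const.mul hFc)).measurable
    rw [hrep, lintegral_map hme hdiag,
      integral_map hdiag.aemeasurable hFc.aestronglyMeasurable]
    refine hmain.trans (le_of_eq ?_)
    congr 2
    have hconst : ∑ i ∈ range (0+1), (∑ j ∈ Finset.Ico i (0+1), L^(j-i) * c j)^2 = (c 0)^2 := by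
      simp
    rw [hconst]
  | succ n ih =>
    intro c hc F hF hInt t
    haveI hprob : IsProbabilityMeasure (markovJointLaw P1 p n) := markovJointLaw_isProb P1 p n
    haveI hprob2 : IsProbabilityMeasure (markovJointLaw P1 p (n+1)) :=
      markovJointLaw_isProb P1 p (n+1)
    set μ := markovJointLaw P1 p n with hμdef
    set K := p.comap (fun xs : Fin (n+1) → X => xs (Fin.last n)) (measurable_pi_apply _)
      with hKdef
    have hrep := markovJointLaw_succ P1 p n
    set g : ((Fin (n+1) → X) × X) → (Fin (n+2) → X) := fun q => Fin.snoc q.1 q.2 with hgdef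
    have hg : Measurable g := measurable_snoc_pair n
    have hFc : Continuous F := l1_lip_continuous (fun k => (hc k).le) hF
    have hIntFg : Integrable (fun q => F (g q)) (μ ⊗ₘ K) :=
      (integrable_map_measure hFc.aestronglyMeasurable hg.aemeasurable).mp
        (by rw [← hrep]; exact hInt)
    have hinner : ∀ (xs : Fin (n+1) → X) (y z : X),
        |F (Fin.snoc xs y) - F (Fin.snoc xs z)| ≤ c (n+1) * dist y z := by
      intro xs y z
      refine (hF _ _).trans (le_of_eq ?_)
      rw [Fin.sum_univ_castSucc]
      simp [Fin.snoc_castSucc, Fin.snoc_last, Fin.val_last]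
    have hIntInner : ∀ (xs : Fin (n+1) → X) (x' : X),
        Integrable (fun y => F (Fin.snoc xs y)) (p x') := by
      intro xs x'
      exact gc_lip_integrable hκ (hGCp x') (hinner xs)
    set G : (Fin (n+1) → X) → ℝ :=
      fun xs => ∫ y, F (Fin.snoc xs y) ∂(p (xs (Fin.last n))) with hGdef
    set c' : ℕ → ℝ := fun j => if j = n then c n + L * c (n+1) else c j with hc'def
    have hc' : ∀ k, 0 < c' k := by
      intro k
      by_cases hk : k = n
      · subst hk
        simp only [hc'def, if_pos rfl]
        nlinarith [hc k, hc (k+1)]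
      · simpa [hc'def, hk] using hc k
    obtain ⟨x₀⟩ : Nonempty X := nonempty_of_prob P1
    have hGlip : ∀ a b, |G a - G b| ≤ ∑ i : Fin (n+1), c' i.val * dist (a i) (b i) := by
      intro a b
      have key1 : |∫ y, F (Fin.snoc a y) ∂(p (a (Fin.last n)))
            - ∫ y, F (Fin.snoc b y) ∂(p (a (Fin.last n)))|
          ≤ ∑ i : Fin (n+1), c i.val * dist (a i) (b i) := by
        rw [← integral_sub (hIntInner a _) (hIntInner b _)]
        have hpt : ∀ y, |F (Fin.snoc a y) - F (Fin.snoc b y)|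
            ≤ ∑ i : Fin (n+1), c i.val * dist (a i) (b i) := by
          intro y
          refine (hF _ _).trans (le_of_eq ?_)
          rw [Fin.sum_univ_castSucc]
          simp [Fin.snoc_castSucc, Fin.snoc_last]
        calc |∫ y, (F (Fin.snoc a y) - F (Fin.snoc b y)) ∂(p (a (Fin.last n)))|
            ≤ ∫ y, |F (Fin.snoc a y) - F (Fin.snoc b y)| ∂(p (a (Fin.last n))) := by
              simpa [Real.norm_eq_abs] using norm_integral_le_integral_norm
                (fun y => F (Fin.snoc a y) - F (Fin.snoc b y)) (μ := p (a (Fin.last n)))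
          _ ≤ ∫ _y, (∑ i : Fin (n+1), c i.val * dist (a i) (b i)) ∂(p (a (Fin.last n))) :=
              integral_mono ((hIntInner a _).sub (hIntInner b _)).abs (integrable_const _)
                (fun y => hpt y)
          _ = ∑ i : Fin (n+1), c i.val * dist (a i) (b i) := by simp
      have key2 : |∫ y, F (Fin.snoc b y) ∂(p (a (Fin.last n)))
            - ∫ y, F (Fin.snoc b y) ∂(p (b (Fin.last n)))|
          ≤ c (n+1) * (L * dist (a (Fin.last n)) (b (Fin.last n))) := by
        have hw := abs_integral_sub_le_w1 (ν₁ := p (a (Fin.last n)))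
          (ν₂ := p (b (Fin.last n))) (hc (n+1)) (hinner b)
          (coupling_set_nonempty x₀ (gc_dist_integrable hκ (hGCp _) x₀)
            (gc_dist_integrable hκ (hGCp _) x₀))
          (hIntInner b _) (hIntInner b _)
        refine hw.trans ?_
        exact mul_le_mul_of_nonneg_left (hLip _ _) (hc (n+1)).le
      have htri : |G a - G b| ≤ |∫ y, F (Fin.snoc a y) ∂(p (a (Fin.last n)))
            - ∫ y, F (Fin.snoc b y) ∂(p (a (Fin.last n)))|
          + |∫ y, F (Fin.snoc b y) ∂(p (a (Fin.last n)))
            - ∫ y, F (Fin.snoc b y) ∂(p (b (Fin.last n)))| := abs_sub_le _ _ _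
      have hsplit : ∑ i : Fin (n+1), c' i.val * dist (a i) (b i)
          = (∑ i : Fin (n+1), c i.val * dist (a i) (b i))
            + L * c (n+1) * dist (a (Fin.last n)) (b (Fin.last n)) := by
        rw [Fin.sum_univ_castSucc, Fin.sum_univ_castSucc (f := fun i : Fin (n+1) =>
          c i.val * dist (a i) (b i))]
        have hcast : ∀ i : Fin n, c' (i.castSucc).val = c (i.castSucc).val := by
          intro i
          have hne : ((Fin.castSucc i : Fin (n+1)) : ℕ) ≠ n := by
            rw [Fin.coe_castSucc]
            exact Nat.ne_of_lt i.isLt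
          simp only [hc'def]
          rw [if_neg hne]
        rw [Finset.sum_congr rfl fun i _ => by rw [hcast i]]
        have hlast : c' (Fin.last n).val = c n + L * c (n+1) := by
          simp [hc'def, Fin.val_last]
        rw [hlast]
        have hclast : c (Fin.last n).val = c n := by simp [Fin.val_last]
        rw [hclast]
        ring
      rw [hsplit]
      have := htri.trans (add_le_add key1 key2)
      linarith
    have hGc : Continuous G := l1_lip_continuous (fun k => (hc' k).le) hGlip
    have hIntG : Integrable G μ := by
      have hpair := (Measure.integrable_compProd_iff hIntFg.aestronglyMeasurable).mp hIntFg
      refine hpair.2.mono' hGc.aestronglyMeasurable ?_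
      filter_upwards with xs
      rw [Real.norm_eq_abs]
      exact norm_integral_le_integral_norm (fun y => F (g (xs, y))) (μ := K xs)
    have hIntEq : ∫ xs, F xs ∂(markovJointLaw P1 p (n+1)) = ∫ xs, G xs ∂μ := by
      rw [hrep, integral_map hg.aemeasurable hFc.aestronglyMeasurable,
        Measure.integral_compProd hIntFg]
      rfl
    have hmeasexp : Measurable (fun z : Fin (n+2) → X => ENNReal.ofReal (Real.exp (t * F z))) :=
      ENNReal.measurable_ofReal.comp
        (Real.continuous_exp.comp (continuous_const.mul hFc)).measurable
    have hGmeasexp : Measurable (fun xs => ENNReal.ofReal (Real.exp (t * G xs))) :=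
      ENNReal.measurable_ofReal.comp
        (Real.continuous_exp.comp (continuous_const.mul hGc)).measurable
    have hSq := sum_sq_step n c c' L (by simp [hc'def]) (fun j hj => by
      have : j ≠ n := by omega
      simp [hc'def, this]) 
    calc ∫⁻ xs, ENNReal.ofReal (Real.exp (t * F xs)) ∂(markovJointLaw P1 p (n+1))
        = ∫⁻ q, ENNReal.ofReal (Real.exp (t * F (g q))) ∂(μ ⊗ₘ K) := by
          rw [hrep, lintegral_map hmeasexp hg]
      _ = ∫⁻ xs, ∫⁻ y, ENNReal.ofReal (Real.exp (t * F (g (xs, y)))) ∂(K xs) ∂μ :=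
          Measure.lintegral_compProd (hmeasexp.comp hg)
      _ ≤ ∫⁻ xs, ENNReal.ofReal (Real.exp (t * G xs + κ₁ * (c (n+1))^2 * t^2 / 2)) ∂μ := by
          refine lintegral_mono fun xs => ?_
          exact gc_lintegral hκ (hGCp (xs (Fin.last n))) (hc (n+1)) (hinner xs) t
      _ = (∫⁻ xs, ENNReal.ofReal (Real.exp (t * G xs)) ∂μ)
            * ENNReal.ofReal (Real.exp (κ₁ * (c (n+1))^2 * t^2 / 2)) := by
          simp_rw [Real.exp_add, ENNReal.ofReal_mul (Real.exp_nonneg _)]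
          exact lintegral_mul_const _ hGmeasexp
      _ ≤ ENNReal.ofReal (Real.exp (t * ∫ xs, G xs ∂μ +
            κ₁ * (∑ i ∈ range (n+1), (∑ j ∈ Finset.Ico i (n+1), L^(j-i) * c' j)^2) * t^2 / 2))
            * ENNReal.ofReal (Real.exp (κ₁ * (c (n+1))^2 * t^2 / 2)) :=
          mul_le_mul_left (ih c' hc' G hGlip hIntG t) _
      _ = ENNReal.ofReal (Real.exp (t * ∫ xs, F xs ∂(markovJointLaw P1 p (n+1)) +
            κ₁ * (∑ i ∈ range (n+1+1), (∑ j ∈ Finset.Ico i (n+1+1), L^(j-i) * c j)^2)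
              * t^2 / 2)) := by
          rw [← ENNReal.ofReal_mul (Real.exp_nonneg _), ← Real.exp_add, hIntEq]
          congr 2
          linear_combination (t^2/2 * κ₁) * hSq

end Main

/-- Theorem 1.1: if `P^{(1)}` and every `p(·|x)` satisfy `GC(κ₁)` and `x ↦ p(·|x)` is
`L`-Lipschitz into `(Prob₁(X), W₁)`, then the joint law of the first `n+1` variables
satisfies `GC(κ₁ ∑_{m=1}^{n+1} (∑_{k=0}^{m-1} L^k)²)` on `(X^{n+1}, d^{(1)})`, i.e. for
every function `F` that is `1`-Lipschitz for the ℓ¹-metric `∑_i d(x_i, y_i)`. -/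
theorem markov_gaussian_concentration [PolishSpace X] [BorelSpace X]
    (P1 : Measure X) [IsProbabilityMeasure P1] (p : Kernel X X) [IsMarkovKernel p]
    (κ₁ L : ℝ) (hκ : 0 < κ₁) (hL : 0 ≤ L)
    (hGC1 : GaussianConcentration κ₁ P1)
    (hGCp : ∀ x : X, GaussianConcentration κ₁ (p x))
    (hLip : ∀ x y : X, wasserstein1 (p x) (p y) ≤ L * dist x y)
    (n : ℕ) :
    ∀ F : (Fin (n + 1) → X) → ℝ,
      (∀ a b : Fin (n + 1) → X, |F a - F b| ≤ ∑ i : Fin (n + 1), dist (a i) (b i)) →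
      Integrable F (markovJointLaw P1 p n) → ∀ t : ℝ,
        ∫ xs, Real.exp (t * F xs) ∂(markovJointLaw P1 p n) ≤
          Real.exp (t * ∫ xs, F xs ∂(markovJointLaw P1 p n) +
            (κ₁ * ∑ m ∈ range (n + 1), (∑ k ∈ range (m + 1), L ^ k) ^ 2) * t ^ 2 / 2) := by
  intro F hF hInt t
  haveI := markovJointLaw_isProb P1 p n
  have hF' : ∀ a b : Fin (n+1) → X,
      |F a - F b| ≤ ∑ i : Fin (n+1), (fun _ : ℕ => (1:ℝ)) i.val * dist (a i) (b i) := by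
    intro a b; simpa using hF a b
  have hkey := markov_key P1 p κ₁ L hκ hL hGC1 hGCp hLip n (fun _ => 1)
    (fun _ => one_pos) F hF' hInt t
  have hFc : Continuous F := l1_lip_continuous (c := fun _ => (1:ℝ)) (fun _ => zero_le_one) hF'
  have hnn : 0 ≤ᵐ[markovJointLaw P1 p n] fun xs => Real.exp (t * F xs) :=
    Filter.Eventually.of_forall fun xs => Real.exp_nonneg _
  rw [integral_eq_lintegral_of_nonneg_ae hnn (Real.continuous_exp.comp
    (continuous_const.mul hFc)).aestronglyMeasurable]
  have hle := ENNReal.toReal_mono ENNReal.ofReal_ne_top hkey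
  rw [ENNReal.toReal_ofReal (Real.exp_nonneg _)] at hle
  refine hle.trans (le_of_eq ?_)
  congr 1
  have hs : (∑ i ∈ range (n+1), (∑ j ∈ Finset.Ico i (n+1), L^(j-i) * (fun _ : ℕ => (1:ℝ)) j)^2)
      = ∑ m ∈ range (n+1), (∑ k ∈ range (m+1), L ^ k)^2 := by
    simpa using sum_reflect n L
  rw [hs]
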